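/- Let α, β > −1 be real numbers, let θ be a positive even integer, let r, c₀ be real numbers, and let n ≠ m be integers with n, m ≥ 1. Suppose yₙ, yₘ : ℝ → ℝ are polynomial functions such that for i ∈ {n, m} and all real x: (x−r)(1−x²)yᵢ''(x) + (−(α+β+θ+2)x² + (β−α+r(α+β+2))x + θ − r(β−α))yᵢ'(x) + (i(i+α+β+θ+1)(x−r) − c₀)yᵢ(x) = 0. Then ∫_{−1}^{1} (x−r)^θ (1−x)^α (1+x)^β yₙ(x) yₘ(x) dx = 0. -/

import Mathlib

/-- Orthogonality of exceptional X₁-Jacobi polynomials on [-1,1] with respect to the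
weight `(x-r)^θ (1-x)^α (1+x)^β`. -/
theorem x1_jacobi_orthogonality
    (α β : ℝ) (hα : -1 < α) (hβ : -1 < β)
    (θ : ℕ) (hθpos : 0 < θ) (hθeven : Even θ)
    (r c0 : ℝ) (n m : ℤ) (hn : 1 ≤ n) (hm : 1 ≤ m) (hnm : n ≠ m)
    (yn ym : ℝ → ℝ)
    (hynpoly : ∃ P : Polynomial ℝ, ∀ x, yn x = P.eval x)
    (hympoly : ∃ P : Polynomial ℝ, ∀ x, ym x = P.eval x)
    (heqn : ∀ x : ℝ,
      (x - r) * (1 - x ^ 2) * deriv (deriv yn) x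
        + (-(α + β + θ + 2) * x ^ 2 + (β - α + r * (α + β + 2)) * x
            + θ - r * (β - α)) * deriv yn x
        + ((n : ℝ) * ((n : ℝ) + α + β + θ + 1) * (x - r) - c0) * yn x = 0)
    (heqm : ∀ x : ℝ,
      (x - r) * (1 - x ^ 2) * deriv (deriv ym) x
        + (-(α + β + θ + 2) * x ^ 2 + (β - α + r * (α + β + 2)) * x
            + θ - r * (β - α)) * deriv ym x
        + ((m : ℝ) * ((m : ℝ) + α + β + θ + 1) * (x - r) - c0) * ym x = 0) :
    ∫ x in (-1 : ℝ)..1, (x - r) ^ θ * (1 - x) ^ α * (1 + x) ^ β * yn x * ym x = 0 := by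
  obtain ⟨P, hP⟩ := hynpoly
  obtain ⟨Q, hQ⟩ := hympoly
  have hyn : yn = fun x => P.eval x := funext hP
  have hym : ym = fun x => Q.eval x := funext hQ
  subst hyn; subst hym
  have hdP : deriv (fun x : ℝ => P.eval x) = fun x => P.derivative.eval x :=
    funext fun _ => Polynomial.deriv P
  have hdP2 : deriv (fun x : ℝ => P.derivative.eval x)
      = fun x => P.derivative.derivative.eval x := funext fun _ => Polynomial.deriv _
  have hdQ : deriv (fun x : ℝ => Q.eval x) = fun x => Q.derivative.eval x :=
    funext fun _ => Polynomial.deriv Q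
  have hdQ2 : deriv (fun x : ℝ => Q.derivative.eval x)
      = fun x => Q.derivative.derivative.eval x := funext fun _ => Polynomial.deriv _
  simp only [hdP, hdP2] at heqn
  simp only [hdQ, hdQ2] at heqm
  set f : ℝ → ℝ := fun x => (x - r) ^ θ * (1 - x) ^ α * (1 + x) ^ β * P.eval x * Q.eval x
    with hf
  by_cases hint : IntervalIntegrable f MeasureTheory.volume (-1) 1
  · set F : ℝ → ℝ := fun x => (x - r) ^ θ * (1 - x) ^ (α + 1) * (1 + x) ^ (β + 1) *
      (P.derivative.eval x * Q.eval x - P.eval x * Q.derivative.eval x) with hFdef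
    set c : ℝ := (m : ℝ) * ((m : ℝ) + α + β + θ + 1)
      - (n : ℝ) * ((n : ℝ) + α + β + θ + 1) with hcdef
    have hc : c ≠ 0 := by
      have h1 : ((m : ℝ) - n) ≠ 0 := by
        have : (n : ℝ) ≠ (m : ℝ) := by exact_mod_cast hnm
        exact sub_ne_zero.2 (Ne.symm this)
      have hn' : (1 : ℝ) ≤ (n : ℝ) := by exact_mod_cast hn
      have hm' : (1 : ℝ) ≤ (m : ℝ) := by exact_mod_cast hm
      have hθ' : (1 : ℝ) ≤ (θ : ℝ) := by exact_mod_cast hθpos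
      have h2 : (0 : ℝ) < (m : ℝ) + n + α + β + θ + 1 := by linarith
      have : c = ((m : ℝ) - n) * ((m : ℝ) + n + α + β + θ + 1) := by rw [hcdef]; ring
      rw [this]
      exact mul_ne_zero h1 h2.ne'
    have hkey : ∀ x ∈ Set.Ioo (-1 : ℝ) 1, HasDerivAt F (c * f x) x := by
      intro x hx
      have h1x : (0 : ℝ) < 1 - x := by linarith [hx.2]
      have h2x : (0 : ℝ) < 1 + x := by linarith [hx.1]
      have hd1 : HasDerivAt (fun y : ℝ => (y - r) ^ θ) ((θ : ℝ) * (x - r) ^ (θ - 1)) x := by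
        simpa using ((hasDerivAt_id x).sub_const r).fun_pow θ
      have hd2 : HasDerivAt (fun y : ℝ => (1 - y) ^ (α + 1)) (-(α + 1) * (1 - x) ^ α) x := by
        have h := ((hasDerivAt_id x).const_sub 1).rpow_const (p := α + 1) (Or.inl h1x.ne')
        convert h using 1
        · rfl
        rw [add_sub_cancel_right]; simp only [id_eq]; ring
      have hd3 : HasDerivAt (fun y : ℝ => (1 + y) ^ (β + 1)) ((β + 1) * (1 + x) ^ β) x := by
        have h := ((hasDerivAt_id x).const_add 1).rpow_const (p := β + 1) (Or.inl h2x.ne')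
        convert h using 1
        · rfl
        rw [add_sub_cancel_right]; simp only [id_eq]; ring
      have hdW : HasDerivAt
          (fun y : ℝ => P.derivative.eval y * Q.eval y - P.eval y * Q.derivative.eval y)
          ((P.derivative.derivative.eval x * Q.eval x + P.derivative.eval x * Q.derivative.eval x)
            - (P.derivative.eval x * Q.derivative.eval x + P.eval x * Q.derivative.derivative.eval x)) x :=
        ((P.derivative.hasDerivAt x).mul (Q.hasDerivAt x)).sub
          ((P.hasDerivAt x).mul (Q.derivative.hasDerivAt x))
      have hbig := ((hd1.fun_mul hd2).fun_mul hd3).fun_mul hdW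
      convert hbig using 1
      · rfl
      · rfl
      simp only [hcdef, hf]
      have hA1 : (1 - x : ℝ) ^ (α + 1) = (1 - x) ^ α * (1 - x) := Real.rpow_add_one h1x.ne' α
      have hB1 : (1 + x : ℝ) ^ (β + 1) = (1 + x) ^ β * (1 + x) := Real.rpow_add_one h2x.ne' β
      have hT : (x - r) ^ θ = (x - r) ^ (θ - 1) * (x - r) := by
        rw [← pow_succ, Nat.sub_add_cancel hθpos]
      rw [hA1, hB1, hT]
      linear_combination
        ((x - r) ^ (θ - 1) * (1 - x) ^ α * (1 + x) ^ β * P.eval x) * heqm x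
        - ((x - r) ^ (θ - 1) * (1 - x) ^ α * (1 + x) ^ β * Q.eval x) * heqn x
    have hcont : ContinuousOn F (Set.Icc (-1 : ℝ) 1) := by
      have cA : Continuous fun x : ℝ => (1 - x) ^ (α + 1) := by
        rw [continuous_iff_continuousAt]; intro x
        exact (Real.continuousAt_rpow_const _ _ (Or.inr (by linarith))).comp
          ((continuous_const.sub continuous_id).continuousAt)
      have cB : Continuous fun x : ℝ => (1 + x) ^ (β + 1) := by
        rw [continuous_iff_continuousAt]; intro x
        exact (Real.continuousAt_rpow_const _ _ (Or.inr (by linarith))).comp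
          ((continuous_const.add continuous_id).continuousAt)
      have : Continuous F := by
        rw [hFdef]
        exact ((((continuous_id.sub continuous_const).pow θ).mul cA).mul cB).mul
          (((P.derivative.continuous_aeval).mul (Q.continuous_aeval)).sub
            ((P.continuous_aeval).mul (Q.derivative.continuous_aeval)))
      exact this.continuousOn
    have hint2 : IntervalIntegrable (fun x => c * f x) MeasureTheory.volume (-1) 1 :=
      hint.const_mul c
    have hFTC := intervalIntegral.integral_eq_sub_of_hasDeriv_right_of_le (by norm_num)
      hcont (fun x hx => (hkey x hx).hasDerivWithinAt) hint2
    have hF1 : F 1 = 0 := by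
      rw [hFdef]
      simp only
      rw [show (1 : ℝ) - 1 = 0 by norm_num, Real.zero_rpow (by linarith : α + 1 ≠ 0)]
      ring
    have hFm1 : F (-1) = 0 := by
      rw [hFdef]
      simp only
      rw [show (1 : ℝ) + -1 = 0 by norm_num, Real.zero_rpow (by linarith : β + 1 ≠ 0)]
      ring
    rw [intervalIntegral.integral_const_mul, hF1, hFm1, sub_zero] at hFTC
    rcases mul_eq_zero.1 hFTC with h | h
    · exact absurd h hc
    · exact h
  · exact intervalIntegral.integral_undef hint
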